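/- Let v ∈ L²((0,π), ℂ), α ∈ ℝ, and let p ≥ 1 be an integer. Define the Fourier coefficients c_p = ∫₀^π v(x)·√(2/π)·cos(2px) dx and s_p = ∫₀^π v(x)·√(2/π)·sin(2px) dx. Then the function λ ↦ Δ(α,λ) is differentiable at λ = 2p with derivative Δ'(α,2p) = −(π²/(4p))·α·(|c_p|² + |s_p|²); equivalently, α·(|c_p|² + |s_p|²) = −(4p/π²)·Δ'(α,2p). -/

import Mathlib

open MeasureTheory intervalIntegral

/-- Fourier transform `ṽ(λ) = ∫₀^π e^{-iλx} v(x) dx`. -/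
noncomputable def ftilde (v : ℝ → ℂ) (l : ℂ) : ℂ :=
  ∫ x in (0:ℝ)..Real.pi, Complex.exp (-Complex.I * l * x) * v x

/-- `Φ(λ) = ∫₀^π (∫₀^x e^{-iλ(x−t)} conj(v(t)) dt) v(x) dx`. -/
noncomputable def PhiFun (v : ℝ → ℂ) (l : ℂ) : ℂ :=
  ∫ x in (0:ℝ)..Real.pi,
    (∫ t in (0:ℝ)..x, Complex.exp (-Complex.I * l * (x - t)) * (starRingEnd ℂ) (v t)) * v x

/-- `Δ(0,λ) = 2(1 − cos πλ)`. -/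
noncomputable def Delta0 (l : ℂ) : ℂ := 2 * (1 - Complex.cos (Real.pi * l))

/-- `R(λ) = (1 − e^{-iλπ})(Φ(λ)(1 − e^{iλπ}) − ṽ(λ)ṽ*(λ))`. -/
noncomputable def Rfun (v : ℝ → ℂ) (l : ℂ) : ℂ :=
  (1 - Complex.exp (-Complex.I * l * Real.pi)) *
    (PhiFun v l * (1 - Complex.exp (Complex.I * l * Real.pi))
      - ftilde v l * (starRingEnd ℂ) (ftilde v ((starRingEnd ℂ) l)))

/-- `Δ(α,λ) = Δ(0,λ) + (α/(2iλ))(R(λ) − R(−λ))`. -/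
noncomputable def DeltaA (v : ℝ → ℂ) (α : ℝ) (l : ℂ) : ℂ :=
  Delta0 l + ((α : ℂ) / (2 * Complex.I * l)) * (Rfun v l - Rfun v (-l))

open Filter Set

/-- Product rule when the first factor vanishes and the second is merely continuous. -/
lemma aux_hasDerivAt_mul_contAt {f g : ℂ → ℂ} {x f' : ℂ} (hf : HasDerivAt f f' x)
    (hfx : f x = 0) (hg : ContinuousAt g x) :
    HasDerivAt (fun y => f y * g y) (f' * g x) x := by
  rw [hasDerivAt_iff_tendsto_slope] at hf ⊢
  have heq : ∀ y, slope (fun y => f y * g y) x y = slope f x y * g y := by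
    intro y
    simp only [slope_def_field, hfx, mul_zero, sub_zero, zero_mul]
    ring
  refine Tendsto.congr (fun y => (heq y).symm) ?_
  exact hf.mul (hg.tendsto.mono_left nhdsWithin_le_nhds)

/-- Product rule when the first factor vanishes to second order and the second is
merely locally bounded. -/
lemma aux_hasDerivAt_mul_bounded {f g : ℂ → ℂ} {x : ℂ} {M : ℝ} (hf : HasDerivAt f 0 x)
    (hfx : f x = 0) (hg : ∀ᶠ y in nhds x, ‖g y‖ ≤ M) :
    HasDerivAt (fun y => f y * g y) 0 x := by
  rw [hasDerivAt_iff_tendsto_slope] at hf ⊢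
  have heq : ∀ y, slope (fun y => f y * g y) x y = slope f x y * g y := by
    intro y
    simp only [slope_def_field, hfx, mul_zero, sub_zero, zero_mul]
    ring
  refine Tendsto.congr (fun y => (heq y).symm) ?_
  rw [tendsto_zero_iff_norm_tendsto_zero]
  have hb : ∀ᶠ y in nhdsWithin x {x}ᶜ, ‖slope f x y * g y‖ ≤ ‖slope f x y‖ * M :=
    (hg.filter_mono nhdsWithin_le_nhds).mono fun y hy => by
      rw [norm_mul]; exact mul_le_mul_of_nonneg_left hy (norm_nonneg _)
  have hlim : Tendsto (fun y => ‖slope f x y‖ * M) (nhdsWithin x {x}ᶜ) (nhds 0) := by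
    simpa using hf.norm.mul_const M
  exact squeeze_zero' (Eventually.of_forall fun y => norm_nonneg _) hb hlim

lemma aux_norm_exp_bound {l : ℂ} {x : ℝ} (hx : 0 ≤ x) (hxπ : x ≤ Real.pi) {B : ℝ}
    (hl : ‖l‖ ≤ B) : ‖Complex.exp (-Complex.I * l * x)‖ ≤ Real.exp (Real.pi * B) := by
  rw [Complex.norm_exp]
  apply Real.exp_le_exp.mpr
  have hre : (-Complex.I * l * (x:ℂ)).re = l.im * x := by
    simp [Complex.mul_re, Complex.mul_im]
  rw [hre]
  have h1 : |l.im| ≤ B := le_trans (Complex.abs_im_le_norm l) hl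
  have h2 : l.im * x ≤ |l.im| * x := mul_le_mul_of_nonneg_right (le_abs_self _) hx
  nlinarith [abs_nonneg l.im]

lemma aux_contAt_ftilde {v : ℝ → ℂ} (hvi : IntegrableOn v (Set.Ioc 0 Real.pi)) (μ : ℂ) :
    ContinuousAt (ftilde v) μ := by
  have heq : ftilde v = fun l => ∫ x in Set.Ioc (0:ℝ) Real.pi,
      Complex.exp (-Complex.I * l * x) * v x :=
    funext fun l => intervalIntegral.integral_of_le Real.pi_pos.le
  rw [heq]
  apply continuousAt_of_dominated (bound := fun x => Real.exp (Real.pi * (‖μ‖ + 1)) * ‖v x‖)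
  · exact Eventually.of_forall fun l =>
      ((Complex.continuous_exp.comp (by continuity)).aestronglyMeasurable).mul
        hvi.aestronglyMeasurable
  · filter_upwards [Metric.ball_mem_nhds μ one_pos] with l hl
    filter_upwards [ae_restrict_mem measurableSet_Ioc] with x hx
    rw [norm_mul]
    have hlB : ‖l‖ ≤ ‖μ‖ + 1 := by
      have := norm_sub_norm_le l μ
      have h2 : ‖l - μ‖ < 1 := mem_ball_iff_norm.mp hl
      linarith
    exact mul_le_mul_of_nonneg_right (aux_norm_exp_bound hx.1.le hx.2 hlB) (norm_nonneg _)
  · exact hvi.norm.const_mul _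
  · refine Eventually.of_forall fun x => ?_
    exact ((Complex.continuous_exp.comp (by continuity)).continuousAt).mul continuousAt_const

lemma aux_phi_bound {v : ℝ → ℂ} (hvi : IntegrableOn v (Set.Ioc 0 Real.pi)) {l : ℂ} {B : ℝ}
    (hl : ‖l‖ ≤ B) :
    ‖PhiFun v l‖ ≤ Real.exp (Real.pi * B) * (∫ t in Set.Ioc (0:ℝ) Real.pi, ‖v t‖)
      * (∫ t in Set.Ioc (0:ℝ) Real.pi, ‖v t‖) := by
  set Iv := ∫ t in Set.Ioc (0:ℝ) Real.pi, ‖v t‖ with hIv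
  have hIvnn : 0 ≤ Iv := integral_nonneg fun t => norm_nonneg _
  have hKnn : (0:ℝ) ≤ Real.exp (Real.pi * B) := (Real.exp_pos _).le
  rw [PhiFun, intervalIntegral.integral_of_le Real.pi_pos.le]
  have hb : (∫ x in Set.Ioc (0:ℝ) Real.pi, (Real.exp (Real.pi * B) * Iv) * ‖v x‖)
      = Real.exp (Real.pi * B) * Iv * Iv := by
    rw [MeasureTheory.integral_const_mul]
  rw [← hb]
  apply MeasureTheory.norm_integral_le_of_norm_le ((hvi.norm).const_mul _)
  filter_upwards [ae_restrict_mem measurableSet_Ioc] with x hx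
  rw [norm_mul]
  have hinner : ‖∫ t in (0:ℝ)..x, Complex.exp (-Complex.I * l * (x - t)) * (starRingEnd ℂ) (v t)‖
      ≤ Real.exp (Real.pi * B) * Iv := by
    rw [intervalIntegral.integral_of_le hx.1.le]
    have hvix : IntegrableOn v (Set.Ioc 0 x) :=
      hvi.mono_set (Set.Ioc_subset_Ioc_right hx.2)
    calc ‖∫ t in Set.Ioc (0:ℝ) x, Complex.exp (-Complex.I * l * (x - t)) * (starRingEnd ℂ) (v t)‖
        ≤ ∫ t in Set.Ioc (0:ℝ) x, Real.exp (Real.pi * B) * ‖v t‖ := by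
          apply MeasureTheory.norm_integral_le_of_norm_le ((hvix.norm).const_mul _)
          filter_upwards [ae_restrict_mem measurableSet_Ioc] with t ht
          rw [norm_mul]
          have h1 : ‖Complex.exp (-Complex.I * l * ((x:ℂ) - (t:ℂ)))‖
              ≤ Real.exp (Real.pi * B) := by
            have hxt : ((x:ℂ) - (t:ℂ)) = ((x - t : ℝ) : ℂ) := by push_cast; ring
            rw [hxt]
            exact aux_norm_exp_bound (by linarith [ht.2]) (by linarith [ht.1, hx.2]) hl
          have h2 : ‖(starRingEnd ℂ) (v t)‖ = ‖v t‖ := by simp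
          rw [h2]
          exact mul_le_mul_of_nonneg_right h1 (norm_nonneg _)
      _ ≤ ∫ t in Set.Ioc (0:ℝ) Real.pi, Real.exp (Real.pi * B) * ‖v t‖ := by
          apply MeasureTheory.setIntegral_mono_set ((hvi.norm).const_mul _)
          · filter_upwards with t using mul_nonneg hKnn (norm_nonneg _)
          · exact HasSubset.Subset.eventuallyLE (Set.Ioc_subset_Ioc_right hx.2)
      _ = Real.exp (Real.pi * B) * Iv := by rw [MeasureTheory.integral_const_mul]
  exact mul_le_mul_of_nonneg_right hinner (norm_nonneg _)

lemma aux_Rfun_zero {v : ℝ → ℂ} {μ : ℂ} (hμ : Complex.exp (Complex.I * μ * Real.pi) = 1) :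
    Rfun v μ = 0 := by
  have h0 : Complex.exp (-Complex.I * μ * Real.pi) = 1 := by
    rw [show -Complex.I * μ * (Real.pi:ℂ) = -(Complex.I * μ * Real.pi) by ring,
      Complex.exp_neg, hμ, inv_one]
  rw [Rfun, h0, sub_self, zero_mul]

lemma aux_hasDerivAt_Rfun {v : ℝ → ℂ} (hvi : IntegrableOn v (Set.Ioc 0 Real.pi)) (μ : ℂ)
    (hμ : Complex.exp (Complex.I * μ * Real.pi) = 1) :
    HasDerivAt (Rfun v)
      (-(Complex.I * Real.pi) *
        (ftilde v μ * (starRingEnd ℂ) (ftilde v ((starRingEnd ℂ) μ)))) μ := by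
  have h0 : Complex.exp (-Complex.I * μ * Real.pi) = 1 := by
    rw [show -Complex.I * μ * (Real.pi:ℂ) = -(Complex.I * μ * Real.pi) by ring,
      Complex.exp_neg, hμ, inv_one]
  -- A(l) = 1 - exp(-i l π)
  have hA : HasDerivAt (fun l : ℂ => 1 - Complex.exp (-Complex.I * l * Real.pi))
      (Complex.I * Real.pi) μ := by
    have h1 : HasDerivAt (fun l : ℂ => -Complex.I * l * (Real.pi:ℂ))
        (-Complex.I * Real.pi) μ := by
      simpa using ((hasDerivAt_id μ).const_mul (-Complex.I)).mul_const (Real.pi:ℂ)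
    have h2 := h1.cexp
    rw [h0] at h2
    simpa using h2.const_sub 1
  have hA0 : (fun l : ℂ => 1 - Complex.exp (-Complex.I * l * Real.pi)) μ = 0 := by
    show (1:ℂ) - Complex.exp (-Complex.I * μ * Real.pi) = 0
    rw [h0, sub_self]
  -- C(l) = 1 - exp(i l π)
  have hC : HasDerivAt (fun l : ℂ => 1 - Complex.exp (Complex.I * l * Real.pi))
      (-(Complex.I * Real.pi)) μ := by
    have h1 : HasDerivAt (fun l : ℂ => Complex.I * l * (Real.pi:ℂ))
        (Complex.I * Real.pi) μ := by
      simpa using ((hasDerivAt_id μ).const_mul Complex.I).mul_const (Real.pi:ℂ)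
    have h2 := h1.cexp
    rw [hμ] at h2
    simpa using h2.const_sub 1
  have hC0 : (fun l : ℂ => 1 - Complex.exp (Complex.I * l * Real.pi)) μ = 0 := by
    simp [hμ]
  -- f = A * C has derivative 0 and vanishes
  have hf : HasDerivAt (fun l : ℂ => (1 - Complex.exp (-Complex.I * l * Real.pi))
      * (1 - Complex.exp (Complex.I * l * Real.pi))) 0 μ := by
    have h4 := hA.mul hC
    have h5 : Complex.I * ↑Real.pi * ((fun l : ℂ => 1 - Complex.exp (Complex.I * l * Real.pi)) μ)
        + ((fun l : ℂ => 1 - Complex.exp (-Complex.I * l * Real.pi)) μ) * -(Complex.I * ↑Real.pi)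
        = 0 := by
      show Complex.I * ↑Real.pi * (1 - Complex.exp (Complex.I * μ * Real.pi))
        + (1 - Complex.exp (-Complex.I * μ * Real.pi)) * -(Complex.I * ↑Real.pi) = 0
      rw [h0, hμ]
      ring
    rw [h5] at h4
    exact h4
  have hf0 : (fun l : ℂ => (1 - Complex.exp (-Complex.I * l * Real.pi))
      * (1 - Complex.exp (Complex.I * l * Real.pi))) μ = 0 := by
    show ((1:ℂ) - Complex.exp (-Complex.I * μ * Real.pi))
      * (1 - Complex.exp (Complex.I * μ * Real.pi)) = 0
    rw [h0, sub_self, zero_mul]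
  -- Phi is locally bounded
  have hΦbdd : ∀ᶠ l in nhds μ, ‖PhiFun v l‖ ≤ Real.exp (Real.pi * (‖μ‖ + 1))
      * (∫ t in Set.Ioc (0:ℝ) Real.pi, ‖v t‖) * (∫ t in Set.Ioc (0:ℝ) Real.pi, ‖v t‖) := by
    filter_upwards [Metric.ball_mem_nhds μ one_pos] with l hl
    have hlB : ‖l‖ ≤ ‖μ‖ + 1 := by
      have := norm_sub_norm_le l μ
      have h2 : ‖l - μ‖ < 1 := mem_ball_iff_norm.mp hl
      linarith
    exact aux_phi_bound hvi hlB
  -- T is continuous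
  have hT : ContinuousAt (fun l : ℂ => ftilde v l
      * (starRingEnd ℂ) (ftilde v ((starRingEnd ℂ) l))) μ := by
    apply (aux_contAt_ftilde hvi μ).mul
    exact (Complex.continuous_conj.continuousAt).comp
      ((aux_contAt_ftilde hvi _).comp (Complex.continuous_conj.continuousAt))
  have hterm1 : HasDerivAt (fun l : ℂ => ((1 - Complex.exp (-Complex.I * l * Real.pi))
      * (1 - Complex.exp (Complex.I * l * Real.pi))) * PhiFun v l) 0 μ :=
    aux_hasDerivAt_mul_bounded hf hf0 hΦbdd
  have hterm2 : HasDerivAt (fun l : ℂ => (1 - Complex.exp (-Complex.I * l * Real.pi))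
      * (ftilde v l * (starRingEnd ℂ) (ftilde v ((starRingEnd ℂ) l))))
      (Complex.I * Real.pi *
        (ftilde v μ * (starRingEnd ℂ) (ftilde v ((starRingEnd ℂ) μ)))) μ :=
    aux_hasDerivAt_mul_contAt hA hA0 hT
  have htot := hterm1.sub hterm2
  have hfun : Rfun v = fun l : ℂ => ((1 - Complex.exp (-Complex.I * l * Real.pi))
      * (1 - Complex.exp (Complex.I * l * Real.pi))) * PhiFun v l
      - (1 - Complex.exp (-Complex.I * l * Real.pi))
      * (ftilde v l * (starRingEnd ℂ) (ftilde v ((starRingEnd ℂ) l))) := by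
    funext l
    rw [Rfun]
    ring
  rw [hfun]
  exact htot.congr_deriv (by ring)

lemma aux_ftilde_eval {v : ℝ → ℂ} (hvi : IntervalIntegrable v volume 0 Real.pi) (w : ℂ) :
    ftilde v w = (∫ x in (0:ℝ)..Real.pi, v x * Complex.cos (w * x))
      - (∫ x in (0:ℝ)..Real.pi, v x * Complex.sin (w * x)) * Complex.I := by
  have hcos : IntervalIntegrable (fun x => v x * Complex.cos (w * x)) volume 0 Real.pi :=
    hvi.mul_continuousOn (Continuous.continuousOn (by continuity))
  have hsin : IntervalIntegrable (fun x => v x * Complex.sin (w * x)) volume 0 Real.pi :=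
    hvi.mul_continuousOn (Continuous.continuousOn (by continuity))
  have heq : ∀ x : ℝ, Complex.exp (-Complex.I * w * x) * v x
      = v x * Complex.cos (w * x) - (v x * Complex.sin (w * x)) * Complex.I := by
    intro x
    rw [show -Complex.I * w * (x:ℂ) = (-(w * x)) * Complex.I by ring, Complex.exp_mul_I,
      Complex.cos_neg, Complex.sin_neg]
    ring
  rw [ftilde]
  rw [intervalIntegral.integral_congr (g := fun x => v x * Complex.cos (w * x)
    - (v x * Complex.sin (w * x)) * Complex.I) (fun x _ => heq x)]
  rw [intervalIntegral.integral_sub hcos (hsin.mul_const Complex.I),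
    intervalIntegral.integral_mul_const]

theorem stmt16 (v : ℝ → ℂ)
    (hv : MemLp v 2 (volume.restrict (Set.Ioo (0:ℝ) Real.pi)))
    (α : ℝ) (p : ℕ) (hp : 1 ≤ p)
    (c s : ℂ)
    (hc : c = ∫ x in (0:ℝ)..Real.pi,
      v x * ((Real.sqrt (2 / Real.pi) : ℂ) * Complex.cos (2 * (p : ℂ) * x)))
    (hs : s = ∫ x in (0:ℝ)..Real.pi,
      v x * ((Real.sqrt (2 / Real.pi) : ℂ) * Complex.sin (2 * (p : ℂ) * x))) :
    HasDerivAt (fun l : ℂ => DeltaA v α l)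
      (-(((Real.pi : ℂ) ^ 2 / (4 * (p : ℂ))) * (α : ℂ) *
        (((‖c‖ : ℝ) : ℂ) ^ 2 + ((‖s‖ : ℝ) : ℂ) ^ 2)))
      (2 * (p : ℂ)) := by
  -- integrability
  have hfin : IsFiniteMeasure (volume.restrict (Set.Ioo (0:ℝ) Real.pi)) := by
    constructor
    rw [Measure.restrict_apply_univ]
    exact measure_Ioo_lt_top
  have hvIoo : IntegrableOn v (Set.Ioo (0:ℝ) Real.pi) := by
    haveI := hfin
    exact hv.integrable (by norm_num)
  have hvIoc : IntegrableOn v (Set.Ioc (0:ℝ) Real.pi) :=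
    (integrableOn_Ioc_iff_integrableOn_Ioo).mpr hvIoo
  have hvI : IntervalIntegrable v volume 0 Real.pi :=
    (intervalIntegrable_iff_integrableOn_Ioc_of_le Real.pi_pos.le).mpr hvIoc
  -- exponential facts
  have hμp : Complex.exp (Complex.I * (2 * (p:ℂ)) * Real.pi) = 1 := by
    rw [show Complex.I * (2 * (p:ℂ)) * (Real.pi:ℂ) = ((p:ℤ):ℂ) * (2 * Real.pi * Complex.I) by
      push_cast; ring]
    exact Complex.exp_int_mul_two_pi_mul_I p
  have hμm : Complex.exp (Complex.I * (-(2 * (p:ℂ))) * Real.pi) = 1 := by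
    rw [show Complex.I * (-(2 * (p:ℂ))) * (Real.pi:ℂ)
        = ((-(p:ℤ):ℤ):ℂ) * (2 * Real.pi * Complex.I) by push_cast; ring]
    exact Complex.exp_int_mul_two_pi_mul_I (-(p:ℤ))
  have hp0 : (p:ℂ) ≠ 0 := Nat.cast_ne_zero.mpr (by omega)
  have hμp0 : (2 * (p:ℂ)) ≠ 0 := by
    simp [hp0]
  -- derivative of R at ±2p
  have hRp := aux_hasDerivAt_Rfun hvIoc (2 * (p:ℂ)) hμp
  have hRm := aux_hasDerivAt_Rfun hvIoc (-(2 * (p:ℂ))) hμm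
  have hRneg : HasDerivAt (fun l : ℂ => Rfun v (-l))
      ((-(Complex.I * Real.pi) * (ftilde v (-(2 * (p:ℂ)))
        * (starRingEnd ℂ) (ftilde v ((starRingEnd ℂ) (-(2 * (p:ℂ))))))) * (-1))
      (2 * (p:ℂ)) := by
    exact hRm.comp (2 * (p:ℂ)) (hasDerivAt_neg (2 * (p:ℂ)))
  have hh := hRp.sub hRneg
  -- derivative of α/(2iλ)
  have hg1 : HasDerivAt (fun l : ℂ => (α:ℂ) / (2 * Complex.I * l))
      ((α:ℂ) / (2 * Complex.I) * -(((2 * (p:ℂ)) ^ 2)⁻¹)) (2 * (p:ℂ)) := by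
    have heqf : (fun l : ℂ => (α:ℂ) / (2 * Complex.I * l))
        = fun l : ℂ => (α:ℂ) / (2 * Complex.I) * l⁻¹ := by
      funext l
      rw [← div_div, div_eq_mul_inv]
    rw [heqf]
    exact (hasDerivAt_inv hμp0).const_mul _
  have hprod := hg1.mul hh
  -- derivative of Delta0
  have hΔ0 : HasDerivAt Delta0
      (2 * (Complex.sin ((Real.pi:ℂ) * (2 * (p:ℂ))) * Real.pi)) (2 * (p:ℂ)) := by
    have h1 : HasDerivAt (fun l : ℂ => (Real.pi:ℂ) * l) (Real.pi:ℂ) (2 * (p:ℂ)) := by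
      simpa using (hasDerivAt_id (2 * (p:ℂ))).const_mul (Real.pi:ℂ)
    have h3 := ((h1.ccos).const_sub 1).const_mul 2
    exact h3.congr_deriv (by ring)
  have htot := hΔ0.add hprod
  simp only [DeltaA]
  refine htot.congr_deriv ?_
  rw [Pi.sub_apply]
  -- now prove equality of derivative values
  have hz1 : Rfun v (2 * (p:ℂ)) = 0 := aux_Rfun_zero hμp
  have hz2 : Rfun v (-(2 * (p:ℂ))) = 0 := aux_Rfun_zero hμm
  have hsin0 : Complex.sin ((Real.pi:ℂ) * (2 * (p:ℂ))) = 0 := by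
    rw [show (Real.pi:ℂ) * (2 * (p:ℂ)) = ((2 * (p:ℤ) : ℤ):ℂ) * Real.pi by push_cast; ring]
    exact Complex.sin_int_mul_pi _
  have hconjp : (starRingEnd ℂ) (2 * (p:ℂ)) = 2 * (p:ℂ) := by
    rw [map_mul, Complex.conj_natCast, map_ofNat]
  have hconjm : (starRingEnd ℂ) (-(2 * (p:ℂ))) = -(2 * (p:ℂ)) := by
    rw [map_neg, hconjp]
  set a := ∫ x in (0:ℝ)..Real.pi, v x * Complex.cos (2 * (p:ℂ) * x) with ha
  set b := ∫ x in (0:ℝ)..Real.pi, v x * Complex.sin (2 * (p:ℂ) * x) with hb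
  have hfp : ftilde v (2 * (p:ℂ)) = a - b * Complex.I := aux_ftilde_eval hvI _
  have hfm : ftilde v (-(2 * (p:ℂ))) = a + b * Complex.I := by
    rw [aux_ftilde_eval hvI]
    have hc1 : (∫ x in (0:ℝ)..Real.pi, v x * Complex.cos (-(2 * (p:ℂ)) * x)) = a := by
      apply intervalIntegral.integral_congr
      intro x _
      simp only [neg_mul, Complex.cos_neg]
    have hs1 : (∫ x in (0:ℝ)..Real.pi, v x * Complex.sin (-(2 * (p:ℂ)) * x)) = -b := by
      rw [hb, ← intervalIntegral.integral_neg]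
      apply intervalIntegral.integral_congr
      intro x _
      simp only [neg_mul, Complex.sin_neg]
      ring
    rw [hc1, hs1]
    ring
  -- k facts
  set k : ℂ := ((Real.sqrt (2 / Real.pi) : ℝ) : ℂ) with hk
  have hπpos := Real.pi_pos
  have hk2 : k * k = 2 / (Real.pi : ℂ) := by
    rw [hk, ← Complex.ofReal_mul, Real.mul_self_sqrt (by positivity)]
    push_cast
    ring
  have hc' : c = k * a := by
    rw [hc, ha, ← intervalIntegral.integral_const_mul]
    apply intervalIntegral.integral_congr
    intro x _
    ring
  have hs' : s = k * b := by
    rw [hs, hb, ← intervalIntegral.integral_const_mul]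
    apply intervalIntegral.integral_congr
    intro x _
    ring
  have habs_c : ((‖c‖ : ℝ) : ℂ) ^ 2 = c * (starRingEnd ℂ) c := by
    rw [← Complex.ofReal_pow, Complex.sq_norm, Complex.mul_conj]
  have habs_s : ((‖s‖ : ℝ) : ℂ) ^ 2 = s * (starRingEnd ℂ) s := by
    rw [← Complex.ofReal_pow, Complex.sq_norm, Complex.mul_conj]
  have hconjk : (starRingEnd ℂ) k = k := Complex.conj_ofReal _
  rw [hz1, hz2, hsin0, hconjp, hconjm, hfp, hfm, habs_c, habs_s, hc', hs']
  rw [map_mul, map_mul, hconjk, map_sub, map_add, map_mul, Complex.conj_I]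
  set a' := (starRingEnd ℂ) a with ha'
  set b' := (starRingEnd ℂ) b with hb'
  have hπ0 : (Real.pi : ℂ) ≠ 0 := Complex.ofReal_ne_zero.mpr hπpos.ne'
  have hS : k * a * (k * a') + k * b * (k * b')
      = 2 / (Real.pi:ℂ) * (a * a' + b * b') := by
    linear_combination (a * a' + b * b') * hk2
  have hE : -(Complex.I * (Real.pi:ℂ)) * ((a - b * Complex.I) * (a' - b' * -Complex.I))
      - -(Complex.I * (Real.pi:ℂ)) * ((a + b * Complex.I) * (a' + b' * -Complex.I)) * -1
      = -(Complex.I * (Real.pi:ℂ)) * (2 * (a * a' + b * b')) := by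
    linear_combination (2 * Complex.I * (Real.pi:ℂ) * (b * b')) * Complex.I_sq
  rw [hS, hE]
  field_simp
  ring
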